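/- arXiv:0711.1893 — 5 statements merged into one kernel-verified Lean document; each statement's English description precedes it below -/
import Mathlib

section
/- The function x ↦ log((e^x − 1)/x) − x is strictly decreasing on (1, ∞). Equivalently, for 1 < λ < μ, we have log((e^μ − 1)/μ) − log((e^λ − 1)/λ) < μ − λ. -/
open Real

lemma aux_antitone :
    StrictAntiOn (fun x : ℝ => Real.log ((Real.exp x - 1) / x) - x) (Set.Ici 1) := by
  apply strictAntiOn_of_deriv_neg (convex_Ici 1)
  · apply ContinuousOn.sub _ continuousOn_id
    apply ContinuousOn.log
    · exact ((continuous_exp.sub continuous_const).continuousOn).div continuousOn_id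
        (fun x hx => by have : (1:ℝ) ≤ x := hx; positivity)
    · intro x hx
      have hx1 : (1:ℝ) ≤ x := hx
      have hx0 : (0:ℝ) < x := by linarith
      have hE : 0 < Real.exp x - 1 := by
        have := Real.add_one_lt_exp (show x ≠ 0 by linarith)
        linarith
      positivity
  · intro x hx
    rw [interior_Ici] at hx
    have hx1 : (1:ℝ) < x := hx
    have hx0 : (0:ℝ) < x := by linarith
    have key : x + 1 < Real.exp x := Real.add_one_lt_exp (by linarith)
    have hE : 0 < Real.exp x - 1 := by linarith
    have h1 : HasDerivAt (fun y : ℝ => Real.exp y - 1) (Real.exp x) x :=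
      (Real.hasDerivAt_exp x).sub_const 1
    have h2 : HasDerivAt (fun y : ℝ => (Real.exp y - 1) / y)
        ((Real.exp x * x - (Real.exp x - 1) * 1) / x ^ 2) x :=
      h1.div (hasDerivAt_id x) (ne_of_gt hx0)
    have hq : (Real.exp x - 1) / x ≠ 0 := by positivity
    have h3 := h2.log hq
    have h4 : HasDerivAt (fun y : ℝ => Real.log ((Real.exp y - 1) / y) - y)
        ((Real.exp x * x - (Real.exp x - 1) * 1) / x ^ 2 / ((Real.exp x - 1) / x) - 1) x :=
      h3.sub (hasDerivAt_id x)
    rw [h4.deriv]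
    have heq : (Real.exp x * x - (Real.exp x - 1) * 1) / x ^ 2 / ((Real.exp x - 1) / x)
        = (Real.exp x * x - Real.exp x + 1) / (x * (Real.exp x - 1)) := by
      field_simp
      ring
    rw [heq, sub_neg, div_lt_one (by positivity)]
    nlinarith

theorem stmt_0 :
    StrictAntiOn (fun x : ℝ => Real.log ((Real.exp x - 1) / x) - x) (Set.Ioi 1) ∧
    ∀ l m : ℝ, 1 < l → l < m →
      Real.log ((Real.exp m - 1) / m) - Real.log ((Real.exp l - 1) / l) < m - l := by
  constructor
  · exact aux_antitone.mono Set.Ioi_subset_Ici_self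
  · intro l m hl hlm
    have := aux_antitone (Set.mem_Ici.mpr hl.le) (Set.mem_Ici.mpr (by linarith : (1:ℝ) ≤ m)) hlm
    simp only at this
    linarith
end

section
/- The function c ↦ c·q(c) is strictly decreasing on (1, ∞), where q(c) ∈ (0,1) is the unique solution of q = e^{−c(1−q)}. -/
private noncomputable def fxe : ℝ → ℝ := fun x => x * Real.exp (-x)

private lemma fxe_hasDeriv (x : ℝ) : HasDerivAt fxe ((1 - x) * Real.exp (-x)) x := by
  have h1 : HasDerivAt (fun x : ℝ => Real.exp (-x)) (-Real.exp (-x)) x := by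
    exact ((Real.hasDerivAt_exp (-x)).comp x (hasDerivAt_neg x)).congr_deriv (by simp)
  have h2 := (hasDerivAt_id x).mul h1
  refine h2.congr_deriv ?_
  simp only [id_eq]
  ring

private lemma fxe_mono : StrictMonoOn fxe (Set.Icc 0 1) := by
  apply strictMonoOn_of_deriv_pos (convex_Icc 0 1)
  · exact (continuous_id.mul (Real.continuous_exp.comp continuous_neg)).continuousOn
  · intro x hx
    rw [interior_Icc] at hx
    rw [(fxe_hasDeriv x).deriv]
    have := Real.exp_pos (-x)
    nlinarith [hx.1, hx.2]

private lemma fxe_anti : StrictAntiOn fxe (Set.Ici 1) := by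
  apply strictAntiOn_of_deriv_neg (convex_Ici 1)
  · exact (continuous_id.mul (Real.continuous_exp.comp continuous_neg)).continuousOn
  · intro x hx
    rw [interior_Ici, Set.mem_Ioi] at hx
    rw [(fxe_hasDeriv x).deriv]
    have := Real.exp_pos (-x)
    nlinarith

theorem stmt_6 (q : ℝ → ℝ)
    (hq : ∀ c : ℝ, 1 < c → q c ∈ Set.Ioo (0 : ℝ) 1 ∧ q c = Real.exp (-c * (1 - q c))) :
    StrictAntiOn (fun c => c * q c) (Set.Ioi 1) := by
  -- key equation: fxe (c * q c) = fxe c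
  have key : ∀ c : ℝ, 1 < c → fxe (c * q c) = fxe c := by
    intro c hc
    obtain ⟨⟨hq0, hq1⟩, heq⟩ := hq c hc
    have h : q c * Real.exp (-(c * q c)) = Real.exp (-c) := by
      nth_rewrite 1 [heq]
      rw [← Real.exp_add]
      congr 1
      ring
    unfold fxe
    rw [mul_assoc, h]
  have mem01 : ∀ c : ℝ, 1 < c → c * q c ∈ Set.Icc (0:ℝ) 1 := by
    intro c hc
    obtain ⟨⟨hq0, hq1⟩, _⟩ := hq c hc
    have hpos : 0 < c * q c := mul_pos (by linarith) hq0
    constructor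
    · linarith
    · by_contra h
      push_neg at h
      have hmem : c * q c ∈ Set.Ici (1:ℝ) := le_of_lt h
      have hcm : c ∈ Set.Ici (1:ℝ) := le_of_lt hc
      have := fxe_anti.injOn hmem hcm (key c hc)
      have hc0 : c ≠ 0 := by linarith
      have hq1' : q c = 1 := mul_left_cancel₀ hc0 (this.trans (mul_one c).symm)
      linarith
  intro a ha b hb hab
  simp only [Set.mem_Ioi] at ha hb
  have h1 : fxe (b * q b) < fxe (a * q a) := by
    rw [key a ha, key b hb]
    exact fxe_anti (le_of_lt ha) (le_of_lt hb) hab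
  exact (fxe_mono.lt_iff_lt (mem01 b hb) (mem01 a ha)).mp h1
end

section
/- Let μ > λ > 0 and set α := log((e^μ−1)/μ) − log((e^λ−1)/λ). Let Z be the sum of independent copies of Q*_λ (Poisson(λ) conditioned positive) and Q_α (Poisson(α)). Then Q*_μ stochastically dominates Z: for every positive integer k, P(Q*_μ ≥ k) ≥ P(Z ≥ k). -/
open Finset

lemma exp_tsum (x : ℝ) : Real.exp x = ∑' n : ℕ, x ^ n / n.factorial := by
  rw [Real.exp_eq_exp_ℝ, NormedSpace.exp_eq_tsum_div]

lemma tail_tsum (x : ℝ) (k : ℕ) :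
    ∑' n : ℕ, x ^ (n + k) / (n + k).factorial
      = Real.exp x - ∑ j ∈ range k, x ^ j / j.factorial := by
  have h := Summable.sum_add_tsum_nat_add (f := fun n => x ^ n / n.factorial) k
    (Real.summable_pow_div_factorial x)
  rw [exp_tsum]
  linarith

lemma fact_ineq (n r : ℕ) (hr : 1 ≤ r) : (n+1).factorial * r.factorial ≤ (n + r).factorial := by
  induction r with
  | zero => omega
  | succ r ih =>
    rcases Nat.eq_or_lt_of_le hr with h | h
    · simp [← h]
    · have hr1 : 1 ≤ r := by omega
      calc (n+1).factorial * (r+1).factorial = (r+1) * ((n+1).factorial * r.factorial) := by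
            rw [Nat.factorial_succ r]; ring
        _ ≤ (r+1) * (n + r).factorial := Nat.mul_le_mul_left _ (ih hr1)
        _ ≤ (n + r + 1) * (n + r).factorial := Nat.mul_le_mul_right _ (by omega)
        _ = (n + (r+1)).factorial := by rw [show n + (r+1) = (n+r)+1 by ring, Nat.factorial_succ]

lemma summable_shift (x : ℝ) (k : ℕ) :
    Summable (fun n : ℕ => x ^ (n + k) / (n + k).factorial) :=
  (Real.summable_pow_div_factorial x).comp_injective (add_left_injective k)

-- tail bound: for t ≥ 0, r ≥ 1:  exp t - Σ_{i<r} t^i/i! ≤ t^(r-1) * (exp t - 1)/r!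
lemma tail_bound (t : ℝ) (ht : 0 ≤ t) (r : ℕ) (hr : 1 ≤ r) :
    Real.exp t - ∑ i ∈ range r, t ^ i / i.factorial
      ≤ t ^ (r-1) * (Real.exp t - 1) / r.factorial := by
  have h1 : Real.exp t - ∑ i ∈ range r, t ^ i / i.factorial
      = ∑' n : ℕ, t ^ (n + r) / (n + r).factorial := (tail_tsum t r).symm
  have h2 : Real.exp t - 1 = ∑' n : ℕ, t ^ (n + 1) / (n + 1).factorial := by
    have := tail_tsum t 1; simp at this; linarith
  have h3 : t ^ (r-1) * (∑' n : ℕ, t ^ (n + 1) / (n + 1).factorial) / r.factorial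
      = ∑' n : ℕ, t ^ (n + r) / ((n+1).factorial * r.factorial) := by
    rw [← tsum_mul_left, ← tsum_div_const]
    congr 1; ext n
    rw [mul_div_assoc', div_div, ← pow_add]
    congr 2
    omega
  rw [h1, h2, h3]
  have hg : Summable (fun n : ℕ => t ^ (n + r) / (((n+1).factorial : ℝ) * r.factorial)) := by
    refine (((summable_shift t 1).mul_left (t ^ (r-1))).div_const (r.factorial : ℝ)).congr ?_
    intro n
    rw [mul_div_assoc', div_div, ← pow_add]
    congr 2
    omega
  refine Summable.tsum_le_tsum ?_ (summable_shift t r) hg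
  intro n
  apply div_le_div_of_nonneg_left (by positivity) (by positivity)
  exact_mod_cast fact_ineq n r hr

lemma tri_swap (N : ℕ) (f : ℕ → ℕ → ℝ) :
    ∑ n ∈ range N, ∑ j ∈ range (n+1), f j (n - j)
      = ∑ j ∈ range N, ∑ i ∈ range (N - j), f j i := by
  induction N with
  | zero => simp
  | succ N ih =>
    rw [Finset.sum_range_succ, ih]
    have hR : ∀ j ∈ range (N+1), ∑ i ∈ range (N+1-j), f j i
        = (if j < N then ∑ i ∈ range (N-j), f j i else 0) + f j (N - j) := by
      intro j hj
      simp only [mem_range] at hj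
      by_cases h : j < N
      · simp only [h, if_true]
        rw [show N + 1 - j = (N - j) + 1 by omega, Finset.sum_range_succ]
      · have : j = N := by omega
        subst this
        simp
    rw [Finset.sum_congr rfl hR, Finset.sum_add_distrib]
    congr 1
    · rw [Finset.sum_range_succ]
      simp only [lt_irrefl, if_false, add_zero]
      refine Finset.sum_congr rfl fun j hj => ?_
      simp only [mem_range] at hj
      simp [hj]

-- (A+t)^K / K! = Σ_{j∈range (K+1)} A^j/j! * t^(K-j)/(K-j)!
lemma pow_div_fact (A t : ℝ) (K : ℕ) :
    (A + t) ^ K / K.factorial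
      = ∑ j ∈ range (K+1), A ^ j / j.factorial * (t ^ (K-j) / (K-j).factorial) := by
  rw [add_pow]
  rw [Finset.sum_div]
  refine Finset.sum_congr rfl fun j hj => ?_
  simp only [mem_range] at hj
  have hjK : j ≤ K := by omega
  have h := Nat.choose_mul_factorial_mul_factorial hjK
  have h' : ((K.choose j : ℝ)) * j.factorial * (K-j).factorial = K.factorial := by
    exact_mod_cast congrArg (Nat.cast : ℕ → ℝ) h
  have hj0 : (j.factorial : ℝ) ≠ 0 := by positivity
  have hk0 : ((K-j).factorial : ℝ) ≠ 0 := by positivity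
  have hK0 : (K.factorial : ℝ) ≠ 0 := by positivity
  field_simp
  rw [← h']
  ring

-- P_K(A + t) = Σ_{j∈range K} A^j/j! * P_{K-j}(t)
lemma P_add (A t : ℝ) (K : ℕ) :
    ∑ n ∈ range K, (A + t) ^ n / n.factorial
      = ∑ j ∈ range K, A ^ j / j.factorial * ∑ i ∈ range (K - j), t ^ i / i.factorial := by
  have h1 : ∀ n ∈ range K, (A + t) ^ n / n.factorial
      = ∑ j ∈ range (n+1), A ^ j / j.factorial * (t ^ (n-j) / (n-j).factorial) :=
    fun n _ => pow_div_fact A t n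
  rw [Finset.sum_congr rfl h1, tri_swap K (fun j i => A ^ j / j.factorial * (t ^ i / i.factorial))]
  · refine Finset.sum_congr rfl fun j hj => ?_
    rw [Finset.mul_sum]
lemma ratio_mono (t m : ℝ) (ht : 0 < t) (htm : t ≤ m) :
    (Real.exp t - 1) / t ≤ (Real.exp m - 1) / m := by
  have hm : 0 < m := lt_of_lt_of_le ht htm
  rw [div_le_div_iff₀ ht hm]
  have h1 : Real.exp t - 1 = ∑' n : ℕ, t ^ (n+1) / (n+1).factorial := by
    have := tail_tsum t 1; simp at this; linarith
  have h2 : Real.exp m - 1 = ∑' n : ℕ, m ^ (n+1) / (n+1).factorial := by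
    have := tail_tsum m 1; simp at this; linarith
  have e1 : (Real.exp t - 1) * m = ∑' n : ℕ, t ^ (n+1) / (n+1).factorial * m := by
    rw [h1, tsum_mul_right]
  have e2 : (Real.exp m - 1) * t = ∑' n : ℕ, m ^ (n+1) / (n+1).factorial * t := by
    rw [h2, tsum_mul_right]
  rw [e1, e2]
  refine Summable.tsum_le_tsum ?_ ((summable_shift t 1).mul_right m) ((summable_shift m 1).mul_right t)
  intro n
  rw [div_mul_eq_mul_div, div_mul_eq_mul_div]
  apply div_le_div_of_nonneg_right _ (by positivity)
  calc t ^ (n+1) * m = (t * m) * t ^ n := by ring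
    _ ≤ (t * m) * m ^ n := by
        apply mul_le_mul_of_nonneg_left (pow_le_pow_left₀ (le_of_lt ht) htm n)
        positivity
    _ = m ^ (n+1) * t := by ring

noncomputable def Pp (K : ℕ) (x : ℝ) : ℝ := ∑ j ∈ range K, x ^ j / j.factorial
noncomputable def Ff (K : ℕ) (x : ℝ) : ℝ := Real.exp x - Pp K x
noncomputable def Aa (m t : ℝ) : ℝ :=
  Real.log ((Real.exp m - 1) / m) - (Real.log (Real.exp t - 1) - Real.log t)
noncomputable def Gg (m : ℝ) (K : ℕ) (t : ℝ) : ℝ :=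
  (Ff K (t + Aa m t) - Ff K (Aa m t)) / t

lemma hasDerivAt_Pp (K : ℕ) (x : ℝ) : HasDerivAt (Pp (K+1)) (Pp K x) x := by
  have h : ∀ j ∈ range (K+1), HasDerivAt (fun y : ℝ => y ^ j / j.factorial)
      ((j : ℝ) * x ^ (j-1) / j.factorial) x := by
    intro j _
    exact (hasDerivAt_pow j x).div_const _
  have h2 := HasDerivAt.fun_sum h
  have h3 : (∑ j ∈ range (K+1), (j : ℝ) * x ^ (j-1) / j.factorial) = Pp K x := by
    rw [Finset.sum_range_succ']
    simp only [Nat.cast_zero, zero_mul, Nat.factorial_zero, Nat.cast_one, zero_div, add_zero]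
    unfold Pp
    refine Finset.sum_congr rfl fun i _ => ?_
    rw [Nat.factorial_succ]
    push_cast
    have h1 : (i.factorial : ℝ) ≠ 0 := by positivity
    field_simp
  rw [h3] at h2
  exact h2

lemma hasDerivAt_Ff (K : ℕ) (x : ℝ) : HasDerivAt (Ff (K+1)) (Ff K x) x := by
  have := (Real.hasDerivAt_exp x).sub (hasDerivAt_Pp K x)
  exact this

lemma hasDerivAt_Aa (m t : ℝ) (ht : 0 < t) :
    HasDerivAt (Aa m) (t⁻¹ - Real.exp t / (Real.exp t - 1)) t := by
  have he : Real.exp t - 1 ≠ 0 := by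
    have : 1 < Real.exp t := by
      rw [show (1:ℝ) = Real.exp 0 by simp]
      exact Real.exp_lt_exp.2 ht
    linarith
  have h1 : HasDerivAt (fun t : ℝ => Real.log (Real.exp t - 1))
      (Real.exp t / (Real.exp t - 1)) t := by
    have := ((Real.hasDerivAt_exp t).sub_const 1).log he
    exact this
  have h2 := Real.hasDerivAt_log (ne_of_gt ht)
  have := ((h1.sub h2).const_sub (Real.log ((Real.exp m - 1) / m)))
  exact this.congr_deriv (by ring)

lemma hasDerivAt_Gg (m t : ℝ) (ht : 0 < t) (K : ℕ) :
    HasDerivAt (Gg m (K+1))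
      (((Ff K (t + Aa m t) * (1 + (t⁻¹ - Real.exp t / (Real.exp t - 1)))
          - Ff K (Aa m t) * (t⁻¹ - Real.exp t / (Real.exp t - 1))) * t
        - (Ff (K+1) (t + Aa m t) - Ff (K+1) (Aa m t)) * 1) / t ^ 2) t := by
  have hA := hasDerivAt_Aa m t ht
  have hs : HasDerivAt (fun u : ℝ => u + Aa m u)
      (1 + (t⁻¹ - Real.exp t / (Real.exp t - 1))) t := (hasDerivAt_id t).add hA
  have h1 : HasDerivAt (fun u : ℝ => Ff (K+1) (u + Aa m u))
      (Ff K (t + Aa m t) * (1 + (t⁻¹ - Real.exp t / (Real.exp t - 1)))) t :=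
    (hasDerivAt_Ff K (t + Aa m t)).comp (h₂ := Ff (K+1)) t hs
  have h2 : HasDerivAt (fun u : ℝ => Ff (K+1) (Aa m u))
      (Ff K (Aa m t) * (t⁻¹ - Real.exp t / (Real.exp t - 1))) t :=
    (hasDerivAt_Ff K (Aa m t)).comp t hA
  exact (h1.sub h2).div (hasDerivAt_id t) (ne_of_gt ht)

lemma core (t A : ℝ) (ht : 0 < t) (hA : 0 ≤ A) (K : ℕ) :
    0 ≤ t * (Pp K (t + A) - Real.exp t * Pp K A)
        + (Real.exp t - 1) * (((t + A) ^ K - A ^ K) / K.factorial) := by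
  have hE : 0 < Real.exp t - 1 := by
    have := Real.add_one_le_exp t
    linarith
  have hPadd : Pp K (t + A)
      = ∑ j ∈ range K, A ^ j / j.factorial * Pp (K - j) t := by
    rw [add_comm t A]
    exact P_add A t K
  have hPA : Real.exp t * Pp K A = ∑ j ∈ range K, A ^ j / j.factorial * Real.exp t := by
    rw [Pp, Finset.mul_sum]
    exact Finset.sum_congr rfl fun _ _ => mul_comm _ _
  have hpow : ((t + A) ^ K - A ^ K) / K.factorial
      = ∑ j ∈ range K, A ^ j / j.factorial * (t ^ (K - j) / (K - j).factorial) := by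
    rw [add_comm t A, sub_div, pow_div_fact A t K, Finset.sum_range_succ]
    simp
  rw [hPadd, hPA, hpow, ← Finset.sum_sub_distrib, Finset.mul_sum, Finset.mul_sum,
    ← Finset.sum_add_distrib]
  have hterm : ∀ j ∈ range K, 0 ≤ t * (A ^ j / j.factorial * Pp (K-j) t
        - A ^ j / j.factorial * Real.exp t)
      + (Real.exp t - 1) * (A ^ j / j.factorial * (t ^ (K - j) / (K - j).factorial)) := by
    intro j hj
    simp only [mem_range] at hj
    have hr : 1 ≤ K - j := by omega
    have htb := tail_bound t (le_of_lt ht) (K - j) hr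
    have hPp : (∑ i ∈ range (K - j), t ^ i / i.factorial) = Pp (K - j) t := rfl
    rw [hPp] at htb
    have haj : 0 ≤ A ^ j / j.factorial := by positivity
    obtain ⟨r, hrr⟩ : ∃ r, K - j = r + 1 := ⟨K - j - 1, by omega⟩
    have h1 : t * (Real.exp t - Pp (K - j) t) ≤ t ^ (K - j) * (Real.exp t - 1) / (K - j).factorial := by
      rw [hrr] at htb ⊢
      simp only [Nat.add_sub_cancel] at htb
      calc t * (Real.exp t - Pp (r+1) t)
          ≤ t * (t ^ r * (Real.exp t - 1) / (r+1).factorial) :=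
            mul_le_mul_of_nonneg_left htb (le_of_lt ht)
        _ = t ^ (r+1) * (Real.exp t - 1) / (r+1).factorial := by rw [pow_succ]; ring
    have expand : t * (A ^ j / j.factorial * Pp (K-j) t - A ^ j / j.factorial * Real.exp t)
        + (Real.exp t - 1) * (A ^ j / j.factorial * (t ^ (K - j) / (K - j).factorial))
        = A ^ j / j.factorial * (t ^ (K - j) * (Real.exp t - 1) / (K - j).factorial
            - t * (Real.exp t - Pp (K - j) t)) := by ring
    rw [expand]
    exact mul_nonneg haj (by linarith)
  exact Finset.sum_nonneg hterm

lemma Ff_succ (K : ℕ) (x : ℝ) : Ff (K+1) x = Ff K x - x ^ K / K.factorial := by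
  unfold Ff Pp
  rw [Finset.sum_range_succ]
  ring

lemma exp_sub_one_pos (t : ℝ) (ht : 0 < t) : 0 < Real.exp t - 1 := by
  have := Real.add_one_le_exp t
  linarith

lemma Aa_nonneg (m t : ℝ) (ht : 0 < t) (htm : t ≤ m) : 0 ≤ Aa m t := by
  have hm : 0 < m := lt_of_lt_of_le ht htm
  have h1 := exp_sub_one_pos t ht
  have h2 := exp_sub_one_pos m hm
  unfold Aa
  rw [← Real.log_div (ne_of_gt h1) (ne_of_gt ht)]
  have h3 := ratio_mono t m ht htm
  have h4 := Real.log_le_log (by positivity) h3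
  linarith

lemma deriv_nonneg_Gg (m t : ℝ) (ht : 0 < t) (htm : t ≤ m) (K : ℕ) :
    0 ≤ ((Ff K (t + Aa m t) * (1 + (t⁻¹ - Real.exp t / (Real.exp t - 1)))
          - Ff K (Aa m t) * (t⁻¹ - Real.exp t / (Real.exp t - 1))) * t
        - (Ff (K+1) (t + Aa m t) - Ff (K+1) (Aa m t)) * 1) / t ^ 2 := by
  set A := Aa m t with hAdef
  have hA : 0 ≤ A := Aa_nonneg m t ht htm
  have hE : 0 < Real.exp t - 1 := exp_sub_one_pos t ht
  apply div_nonneg _ (by positivity)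
  have hK : (K.factorial : ℝ) ≠ 0 := by positivity
  have key : (Real.exp t - 1) *
      ((Ff K (t + A) * (1 + (t⁻¹ - Real.exp t / (Real.exp t - 1)))
          - Ff K A * (t⁻¹ - Real.exp t / (Real.exp t - 1))) * t
        - (Ff (K+1) (t + A) - Ff (K+1) A) * 1)
      = t * (Pp K (t + A) - Real.exp t * Pp K A)
        + (Real.exp t - 1) * (((t + A) ^ K - A ^ K) / K.factorial) := by
    rw [Ff_succ K (t + A), Ff_succ K A]
    have h2 : Ff K (t + A) = Real.exp t * Real.exp A - Pp K (t + A) := by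
      unfold Ff
      rw [Real.exp_add]
    have h3 : Ff K A = Real.exp A - Pp K A := rfl
    rw [h2, h3]
    field_simp
    ring
  have h0 := core t A ht hA K
  rw [← key] at h0
  exact nonneg_of_mul_nonneg_right h0 hE

lemma Gg_mono (l m : ℝ) (hl : 0 < l) (hlm : l < m) (K : ℕ) :
    Gg m (K+1) l ≤ Gg m (K+1) m := by
  have hmono : MonotoneOn (Gg m (K+1)) (Set.Icc l m) := by
    apply monotoneOn_of_deriv_nonneg (convex_Icc l m)
    · intro x hx
      have hx0 : 0 < x := lt_of_lt_of_le hl hx.1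
      exact (hasDerivAt_Gg m x hx0 K).continuousAt.continuousWithinAt
    · rw [interior_Icc]
      intro x hx
      have hx0 : 0 < x := lt_trans hl hx.1
      exact (hasDerivAt_Gg m x hx0 K).differentiableAt.differentiableWithinAt
    · rw [interior_Icc]
      intro x hx
      have hx0 : 0 < x := lt_trans hl hx.1
      rw [(hasDerivAt_Gg m x hx0 K).deriv]
      exact deriv_nonneg_Gg m x hx0 (le_of_lt hx.2) K
  exact hmono (Set.left_mem_Icc.2 (le_of_lt hlm)) (Set.right_mem_Icc.2 (le_of_lt hlm))
    (le_of_lt hlm)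

lemma Pp_zero (K : ℕ) : Pp (K+1) 0 = 1 := by
  unfold Pp
  rw [Finset.sum_range_succ']
  simp

theorem stmt_13 (l m : ℝ) (hl : 0 < l) (hlm : l < m) :
    ∀ k : ℕ, 1 ≤ k →
      (∑' j : ℕ, if k ≤ j then
          Real.exp (-(Real.log ((Real.exp m - 1) / m) - Real.log ((Real.exp l - 1) / l))) /
            (Real.exp l - 1) *
            ((l + (Real.log ((Real.exp m - 1) / m) - Real.log ((Real.exp l - 1) / l))) ^ j -
              (Real.log ((Real.exp m - 1) / m) - Real.log ((Real.exp l - 1) / l)) ^ j) /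
            Nat.factorial j
        else 0)
      ≤ ∑' j : ℕ, if k ≤ j then m ^ j / ((Real.exp m - 1) * Nat.factorial j) else 0 := by
  intro k hk
  obtain ⟨K, rfl⟩ : ∃ K, k = K + 1 := ⟨k - 1, by omega⟩
  have hm : 0 < m := lt_trans hl hlm
  have hEl : 0 < Real.exp l - 1 := exp_sub_one_pos l hl
  have hEm : 0 < Real.exp m - 1 := exp_sub_one_pos m hm
  set α : ℝ := Real.log ((Real.exp m - 1) / m) - Real.log ((Real.exp l - 1) / l) with hα
  have hαA : α = Aa m l := by
    unfold Aa
    rw [hα, Real.log_div (ne_of_gt hEl) (ne_of_gt hl)]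
  have hα0 : 0 ≤ α := by
    rw [hαA]; exact Aa_nonneg m l hl (le_of_lt hlm)
  set a : ℝ := l + α with ha
  have hab : 0 ≤ α := hα0
  have ha0 : 0 ≤ a := by positivity
  set c0 : ℝ := Real.exp (-α) / (Real.exp l - 1) with hc0
  have hc0' : c0 = m / (l * (Real.exp m - 1)) := by
    rw [hc0, hα, ← Real.log_div (by positivity) (by positivity),
      Real.exp_neg, Real.exp_log (by positivity)]
    field_simp
  have hc0pos : 0 ≤ c0 := by rw [hc0']; positivity
  -- rewrite LHS
  set f : ℕ → ℝ := fun j => if K + 1 ≤ j then c0 * (a ^ j - α ^ j) / j.factorial else 0 with hf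
  have hfnonneg : ∀ j, 0 ≤ f j := by
    intro j
    rw [hf]
    dsimp only
    split
    · have h1 : α ^ j ≤ a ^ j := pow_le_pow_left₀ hα0 (by rw [ha]; linarith) j
      apply div_nonneg (mul_nonneg hc0pos (by linarith)) (by positivity)
    · exact le_refl _
  have hfs : Summable f := by
    have hle : ∀ j : ℕ, f j ≤ c0 * (a ^ j / j.factorial) := by
      intro j
      rw [hf]
      dsimp only
      split
      · rw [mul_div_assoc]
        apply mul_le_mul_of_nonneg_left _ hc0pos
        apply div_le_div_of_nonneg_right _ (by positivity)
        have : (0:ℝ) ≤ α ^ j := pow_nonneg hα0 j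
        linarith
      · positivity
    exact Summable.of_nonneg_of_le hfnonneg hle
      ((Real.summable_pow_div_factorial a).mul_left c0)
  -- RHS function
  set g : ℕ → ℝ := fun j => if K + 1 ≤ j then m ^ j / ((Real.exp m - 1) * j.factorial) else 0
    with hg
  have hgs : Summable g := by
    have hgnn : ∀ j : ℕ, 0 ≤ g j := by
      intro j
      rw [hg]; dsimp only; split
      · positivity
      · exact le_refl _
    have hgle : ∀ j : ℕ, g j ≤ m ^ j / j.factorial / (Real.exp m - 1) := by
      intro j
      rw [hg]; dsimp only; split
      · rw [div_div, mul_comm]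
      · positivity
    exact Summable.of_nonneg_of_le hgnn hgle
      ((Real.summable_pow_div_factorial m).div_const _)
  -- compute LHS
  have hLHS : tsum f = c0 * (Ff (K+1) a - Ff (K+1) α) := by
    have h1 := Summable.sum_add_tsum_nat_add (f := f) (K+1) hfs
    have h2 : ∑ j ∈ range (K+1), f j = 0 := by
      apply Finset.sum_eq_zero
      intro j hj
      simp only [mem_range] at hj
      rw [hf]
      simp only
      rw [if_neg (by omega)]
    have h3 : ∀ n : ℕ, f (n + (K+1))
        = c0 * (a ^ (n + (K+1)) / (n + (K+1)).factorial
            - α ^ (n + (K+1)) / (n + (K+1)).factorial) := by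
      intro n
      rw [hf]
      simp only
      rw [if_pos (by omega)]
      rw [mul_div_assoc, sub_div]
    have h4 : ∑' n : ℕ, f (n + (K+1)) = c0 * (Ff (K+1) a - Ff (K+1) α) := by
      rw [tsum_congr h3, tsum_mul_left]
      congr 1
      rw [Summable.tsum_sub (summable_shift a (K+1)) (summable_shift α (K+1)),
        tail_tsum a (K+1), tail_tsum α (K+1)]
      rfl
    rw [← h1, h2, h4, zero_add]
  have hRHS : tsum g = Ff (K+1) m / (Real.exp m - 1) := by
    have h1 := Summable.sum_add_tsum_nat_add (f := g) (K+1) hgs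
    have h2 : ∑ j ∈ range (K+1), g j = 0 := by
      apply Finset.sum_eq_zero
      intro j hj
      simp only [mem_range] at hj
      rw [hg]
      simp only
      rw [if_neg (by omega)]
    have h3 : ∀ n : ℕ, g (n + (K+1))
        = m ^ (n + (K+1)) / (n + (K+1)).factorial / (Real.exp m - 1) := by
      intro n
      rw [hg]
      simp only
      rw [if_pos (by omega), div_div, mul_comm]
    have h4 : ∑' n : ℕ, g (n + (K+1)) = Ff (K+1) m / (Real.exp m - 1) := by
      rw [tsum_congr h3, tsum_div_const, tail_tsum m (K+1)]
      rfl
    rw [← h1, h2, h4, zero_add]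
  rw [hLHS, hRHS]
  -- main inequality
  have hGl : c0 * (Ff (K+1) a - Ff (K+1) α) = (m / (Real.exp m - 1)) * Gg m (K+1) l := by
    unfold Gg
    rw [← hαA, ← ha, hc0']
    generalize Ff (K+1) a - Ff (K+1) α = X
    rw [div_mul_eq_mul_div, div_mul_eq_mul_div, mul_div_assoc', div_div]
  have hAmm : Aa m m = 0 := by
    unfold Aa
    rw [Real.log_div (ne_of_gt hEm) (ne_of_gt hm)]
    ring
  have hGm : (m / (Real.exp m - 1)) * Gg m (K+1) m = Ff (K+1) m / (Real.exp m - 1) := by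
    unfold Gg
    rw [hAmm]
    have hFf0 : Ff (K+1) 0 = 0 := by
      unfold Ff
      rw [Pp_zero, Real.exp_zero]
      ring
    rw [hFf0, add_zero]
    field_simp
    ring
  rw [hGl, ← hGm]
  apply mul_le_mul_of_nonneg_left (Gg_mono l m hl hlm K) (by positivity)
end

section
/- Let a ≥ 1 and b ≥ 0 be integers, F a convex increasing function on [0, ∞), and X_1, …, X_a, Y_1, …, Y_b independent non-negative real random variables such that each X_i stochastically dominates each Y_j. Then E[F((1/(a+b))(Σ_{i=1}^a X_i + Σ_{i=1}^b Y_i))] ≤ E[F((1/a) Σ_{i=1}^a X_i)]. -/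
open MeasureTheory Set
open scoped ENNReal

namespace Stmt14Aux


lemma meas_Ioi_le {μ ν : Measure ℝ} (h : ∀ t, μ (Ici t) ≤ ν (Ici t)) (s : ℝ) :
    μ (Ioi s) ≤ ν (Ioi s) := by
  have hset : Ioi s = ⋃ n : ℕ, Ici (s + 1 / (n + 1 : ℝ)) := by
    ext x
    simp only [mem_Ioi, mem_iUnion, mem_Ici]
    constructor
    · intro hx
      obtain ⟨n, hn⟩ := exists_nat_one_div_lt (sub_pos.2 hx)
      exact ⟨n, by linarith⟩
    · rintro ⟨n, hn⟩
      have h1 : (0:ℝ) < 1 / (n + 1 : ℝ) := by positivity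
      linarith
  have hmono : Monotone fun n : ℕ => Ici (s + 1 / (n + 1 : ℝ)) := by
    intro n m hnm
    apply Ici_subset_Ici.2
    have h1 : (1:ℝ) / (m + 1) ≤ 1 / (n + 1) := by
      apply one_div_le_one_div_of_le (by positivity)
      have : (n:ℝ) ≤ m := by exact_mod_cast hnm
      linarith
    linarith
  calc μ (Ioi s) = ⨆ n : ℕ, μ (Ici (s + 1 / (n + 1 : ℝ))) := by
        rw [hset, (hmono.directed_le).measure_iUnion]
  _ ≤ ν (Ioi s) := by
      apply iSup_le fun n => ?_
      refine (h _).trans (measure_mono fun x hx => ?_)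
      have h1 : (0:ℝ) < 1 / (n + 1 : ℝ) := by positivity
      have hx' : s + 1 / (n + 1 : ℝ) ≤ x := hx
      show s < x
      linarith

lemma measure_le_of_isUpperSet {μ ν : Measure ℝ} [IsProbabilityMeasure μ] [IsProbabilityMeasure ν]
    (h : ∀ t, μ (Ici t) ≤ ν (Ici t)) {U : Set ℝ} (hU : IsUpperSet U) : μ U ≤ ν U := by
  rcases U.eq_empty_or_nonempty with rfl | hne
  · simp
  by_cases hbdd : BddBelow U
  · set s := sInf U with hs
    have hsub2 : U ⊆ Ici s := fun y hy => csInf_le hbdd hy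
    have hsub1 : Ioi s ⊆ U := by
      intro x hx
      obtain ⟨y, hyU, hyx⟩ := exists_lt_of_csInf_lt hne hx
      exact hU hyx.le hyU
    by_cases hsU : s ∈ U
    · have hEq : U = Ici s :=
        Subset.antisymm hsub2 (fun x hx => (lt_or_eq_of_le (mem_Ici.1 hx)).elim (fun h' => hsub1 h')
          (fun h' => h' ▸ hsU))
      rw [hEq]; exact h s
    · have hEq : U = Ioi s :=
        Subset.antisymm (fun y hy => lt_of_le_of_ne (mem_Ici.1 (hsub2 hy)) (fun e => hsU (e ▸ hy))) hsub1
      rw [hEq]; exact meas_Ioi_le h s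
  · have hEq : U = univ := by
      ext x
      simp only [mem_univ, iff_true]
      obtain ⟨y, hyU, hyx⟩ := not_bddBelow_iff.1 hbdd x
      exact hU hyx.le hyU
    rw [hEq]
    simp

lemma lintegral_le_of_dom {μ ν : Measure ℝ} [IsProbabilityMeasure μ] [IsProbabilityMeasure ν]
    (h : ∀ t, μ (Ici t) ≤ ν (Ici t)) {g : ℝ → ℝ≥0∞} (hg : Monotone g) (hgm : Measurable g) :
    ∫⁻ x, g x ∂μ ≤ ∫⁻ x, g x ∂ν := by
  have key : ∀ M : ℕ, ∫⁻ x, min (g x) M ∂μ ≤ ∫⁻ x, g x ∂ν := by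
    intro M
    set f : ℝ → ℝ := fun x => (min (g x) M).toReal with hf
    have hne : ∀ x, min (g x) (M : ℝ≥0∞) ≠ ∞ :=
      fun x => ne_top_of_le_ne_top (ENNReal.natCast_ne_top M) (min_le_right _ _)
    have hofReal : ∀ x, ENNReal.ofReal (f x) = min (g x) M :=
      fun x => ENNReal.ofReal_toReal (hne x)
    have hfmono : Monotone f :=
      fun x y hxy => ENNReal.toReal_mono (hne y) (min_le_min (hg hxy) le_rfl)
    have hfnn : ∀ x, 0 ≤ f x := fun x => ENNReal.toReal_nonneg
    calc ∫⁻ x, min (g x) M ∂μ = ∫⁻ x, ENNReal.ofReal (f x) ∂μ := by simp_rw [hofReal]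
    _ = ∫⁻ t in Ioi 0, μ {x | t < f x} :=
        lintegral_eq_lintegral_meas_lt μ (Filter.Eventually.of_forall hfnn)
          hfmono.measurable.aemeasurable
    _ ≤ ∫⁻ t in Ioi 0, ν {x | t < f x} :=
        lintegral_mono fun t => measure_le_of_isUpperSet h
          (fun x y hxy hx => lt_of_lt_of_le hx (hfmono hxy))
    _ = ∫⁻ x, ENNReal.ofReal (f x) ∂ν :=
        (lintegral_eq_lintegral_meas_lt ν (Filter.Eventually.of_forall hfnn)
          hfmono.measurable.aemeasurable).symm
    _ = ∫⁻ x, min (g x) M ∂ν := by simp_rw [hofReal]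
    _ ≤ ∫⁻ x, g x ∂ν := lintegral_mono fun x => min_le_left _ _
  have hsup : ∀ x, ⨆ M : ℕ, min (g x) M = g x := by
    intro x
    rcases eq_or_ne (g x) ∞ with hx | hx
    · simp only [hx, min_eq_right (le_top : (_ : ℝ≥0∞) ≤ ⊤)]
      exact ENNReal.iSup_natCast
    · obtain ⟨M, hM⟩ := ENNReal.exists_nat_gt hx
      apply le_antisymm (iSup_le fun _ => min_le_left _ _)
      exact le_iSup_of_le M (le_min le_rfl hM.le)
  calc ∫⁻ x, g x ∂μ = ∫⁻ x, ⨆ M : ℕ, min (g x) M ∂μ := by simp_rw [hsup]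
  _ = ⨆ M : ℕ, ∫⁻ x, min (g x) M ∂μ :=
      lintegral_iSup (fun M => hgm.min measurable_const)
        (fun M N hMN x => min_le_min le_rfl (by exact_mod_cast Nat.cast_le.2 hMN))
  _ ≤ ∫⁻ x, g x ∂ν := iSup_le key

lemma pi_sum_le : ∀ {m : ℕ} (μ ν : Fin m → Measure ℝ),
    (∀ k, IsProbabilityMeasure (μ k)) → (∀ k, IsProbabilityMeasure (ν k)) →
    (∀ k t, μ k (Ici t) ≤ ν k (Ici t)) → ∀ {g : ℝ → ℝ≥0∞}, Monotone g → Measurable g →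
    ∫⁻ x, g (∑ k, x k) ∂Measure.pi μ ≤ ∫⁻ x, g (∑ k, x k) ∂Measure.pi ν := by
  intro m
  induction m with
  | zero =>
      intro μ ν hμ hν hdom g hg hgm
      haveI := hμ; haveI := hν
      simp only [Finset.univ_eq_empty, Finset.sum_empty]
      rw [lintegral_const, lintegral_const, measure_univ, measure_univ]
  | succ m ih =>
      intro μ ν hμ hν hdom g hg hgm
      haveI := hμ; haveI := hν
      set e := MeasurableEquiv.piFinSuccAbove (fun _ : Fin (m + 1) => ℝ) 0 with he
      have hmpμ := measurePreserving_piFinSuccAbove μ 0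
      have hmpν := measurePreserving_piFinSuccAbove ν 0
      set h : ℝ × (Fin m → ℝ) → ℝ≥0∞ := fun p => g (p.1 + ∑ j, p.2 j) with hh
      have hsum : Measurable fun p : ℝ × (Fin m → ℝ) => p.1 + ∑ j, p.2 j :=
        measurable_fst.add (Finset.measurable_sum _
          (fun j _ => (measurable_pi_apply j).comp measurable_snd))
      have hhm : Measurable h := hgm.comp hsum
      have key : ∀ x : Fin (m + 1) → ℝ, g (∑ k, x k) = h (e x) := by
        intro x
        have h1 : (e x).1 = x 0 := rfl
        have h2 : ∀ j, (e x).2 j = x (Fin.succAbove 0 j) := fun j => rfl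
        simp only [hh, h1, h2]
        rw [Fin.sum_univ_succAbove x 0]
      haveI : ∀ j, IsProbabilityMeasure (μ (Fin.succAbove 0 j)) := fun j => hμ _
      haveI : ∀ j, IsProbabilityMeasure (ν (Fin.succAbove 0 j)) := fun j => hν _
      calc ∫⁻ x, g (∑ k, x k) ∂Measure.pi μ = ∫⁻ x, h (e x) ∂Measure.pi μ :=
            lintegral_congr key
      _ = ∫⁻ p, h p ∂((μ 0).prod (Measure.pi fun j => μ (Fin.succAbove 0 j))) :=
            hmpμ.lintegral_comp hhm
      _ = ∫⁻ x0, ∫⁻ r, h (x0, r) ∂(Measure.pi fun j => μ (Fin.succAbove 0 j)) ∂μ 0 :=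
            lintegral_prod h hhm.aemeasurable
      _ ≤ ∫⁻ x0, ∫⁻ r, h (x0, r) ∂(Measure.pi fun j => ν (Fin.succAbove 0 j)) ∂μ 0 := by
            apply lintegral_mono fun x0 => ?_
            exact ih (fun j => μ (Fin.succAbove 0 j)) (fun j => ν (Fin.succAbove 0 j))
              (fun j => hμ _) (fun j => hν _) (fun j t => hdom _ t)
              (g := fun s => g (x0 + s)) (fun s t hst => hg (add_le_add_right hst x0))
              (hgm.comp (measurable_id.const_add x0))
      _ ≤ ∫⁻ x0, ∫⁻ r, h (x0, r) ∂(Measure.pi fun j => ν (Fin.succAbove 0 j)) ∂ν 0 := by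
            apply lintegral_le_of_dom (hdom 0)
            · intro x y hxy
              exact lintegral_mono fun r => hg (add_le_add_left hxy _)
            · exact Measurable.lintegral_prod_right' hhm
      _ = ∫⁻ p, h p ∂((ν 0).prod (Measure.pi fun j => ν (Fin.succAbove 0 j))) :=
            (lintegral_prod h hhm.aemeasurable).symm
      _ = ∫⁻ x, h (e x) ∂Measure.pi ν := (hmpν.lintegral_comp hhm).symm
      _ = ∫⁻ x, g (∑ k, x k) ∂Measure.pi ν := (lintegral_congr key).symm

lemma iIndepFun_comp_inj {Ω ι κ β : Type*} [MeasurableSpace Ω] {P : Measure Ω}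
    [mβ : MeasurableSpace β] {f : ι → Ω → β}
    (h : ProbabilityTheory.iIndepFun f P) {ψ : κ → ι}
    (hψ : Function.Injective ψ) :
    ProbabilityTheory.iIndepFun (fun k => f (ψ k)) P := by
  classical
  rw [ProbabilityTheory.iIndepFun_iff] at h ⊢
  intro s f' H
  have hg : ∀ k, Function.extend ψ f' (fun _ => Set.univ) (ψ k) = f' k :=
    fun k => hψ.extend_apply f' _ k
  have H2 : ∀ i, i ∈ s.image ψ →
      MeasurableSet[mβ.comap (f i)] (Function.extend ψ f' (fun _ => Set.univ) i) := by
    intro i hi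
    obtain ⟨k, hk, rfl⟩ := Finset.mem_image.1 hi
    rw [hg k]
    exact H k hk
  have key := h (s.image ψ) H2
  have e1 : (⋂ i ∈ s.image ψ, Function.extend ψ f' (fun _ => Set.univ) i) = ⋂ k ∈ s, f' k := by
    ext x
    simp only [Set.mem_iInter, Finset.mem_image]
    constructor
    · intro hx k hk
      rw [← hg k]
      exact hx (ψ k) ⟨k, hk, rfl⟩
    · rintro hx i ⟨k, hk, rfl⟩
      rw [hg k]
      exact hx k hk
  have e2 : ∏ i ∈ s.image ψ, P (Function.extend ψ f' (fun _ => Set.univ) i)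
      = ∏ k ∈ s, P (f' k) := by
    rw [Finset.prod_image (fun x _ y _ hxy => hψ hxy)]
    exact Finset.prod_congr rfl fun k _ => by rw [hg k]
  rw [← e1, ← e2]
  exact key

lemma map_fun_eq_pi {Ω : Type*} [MeasurableSpace Ω] (P : Measure Ω) [IsProbabilityMeasure P]
    {m : ℕ} {f : Fin m → Ω → ℝ} (hfm : ∀ k, Measurable (f k))
    (h : ProbabilityTheory.iIndepFun f P) :
    Measure.pi (fun k => P.map (f k)) = P.map (fun ω k => f k ω) := by
  haveI : ∀ k, IsProbabilityMeasure (P.map (f k)) :=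
    fun k => Measure.isProbabilityMeasure_map (hfm k).aemeasurable
  refine Measure.pi_eq fun s hs => ?_
  rw [Measure.map_apply (measurable_pi_lambda _ hfm) (MeasurableSet.univ_pi hs)]
  have hpre : (fun ω k => f k ω) ⁻¹' (univ.pi s) = ⋂ k, f k ⁻¹' s k := by
    ext ω; simp [Set.mem_pi]
  rw [hpre, h.meas_iInter (fun k => ⟨s k, hs k, rfl⟩)]
  exact Finset.prod_congr rfl fun k _ => (Measure.map_apply (hfm k) (hs k)).symm



lemma card_filter_mem_powersetCard {ι : Type*} [DecidableEq ι] (s : Finset ι) (k : ℕ)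
    (i : ι) (hi : i ∈ s) (hk : 1 ≤ k) :
    ((Finset.powersetCard k s).filter (fun A => i ∈ A)).card
      = Nat.choose (s.card - 1) (k - 1) := by
  have hcard : (s.erase i).card = s.card - 1 := Finset.card_erase_of_mem hi
  rw [← hcard, ← Finset.card_powersetCard]
  apply Finset.card_bij' (fun A _ => A.erase i) (fun B _ => insert i B)
  · intro A hA
    rw [Finset.mem_filter] at hA
    exact Finset.insert_erase hA.2
  · intro B hB
    rw [Finset.mem_powersetCard] at hB
    have hiB : i ∉ B := fun h => Finset.notMem_erase i s (hB.1 h)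
    exact Finset.erase_insert hiB
  · intro A hA
    rw [Finset.mem_filter, Finset.mem_powersetCard] at hA
    obtain ⟨⟨hsub, hAcard⟩, hiA⟩ := hA
    rw [Finset.mem_powersetCard]
    exact ⟨Finset.erase_subset_erase i hsub, by rw [Finset.card_erase_of_mem hiA, hAcard]⟩
  · intro B hB
    rw [Finset.mem_powersetCard] at hB
    obtain ⟨hsub, hBcard⟩ := hB
    have hiB : i ∉ B := fun h => Finset.notMem_erase i s (hsub h)
    rw [Finset.mem_filter, Finset.mem_powersetCard]
    refine ⟨⟨Finset.insert_subset hi (hsub.trans (Finset.erase_subset i s)), ?_⟩,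
      Finset.mem_insert_self i B⟩
    rw [Finset.card_insert_of_notMem hiB, hBcard]
    omega

lemma sum_powersetCard_sum {ι : Type*} [DecidableEq ι] (s : Finset ι) (k : ℕ) (hk : 1 ≤ k)
    (v : ι → ℝ) :
    ∑ A ∈ Finset.powersetCard k s, ∑ i ∈ A, v i
      = (Nat.choose (s.card - 1) (k - 1) : ℝ) * ∑ i ∈ s, v i := by
  calc ∑ A ∈ Finset.powersetCard k s, ∑ i ∈ A, v i
      = ∑ A ∈ Finset.powersetCard k s, ∑ i ∈ s, if i ∈ A then v i else 0 := by
        refine Finset.sum_congr rfl fun A hA => ?_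
        rw [Finset.mem_powersetCard] at hA
        rw [Finset.sum_ite_mem, Finset.inter_eq_right.2 hA.1]
  _ = ∑ i ∈ s, ∑ A ∈ Finset.powersetCard k s, if i ∈ A then v i else 0 := Finset.sum_comm
  _ = ∑ i ∈ s, (Nat.choose (s.card - 1) (k - 1) : ℝ) * v i := by
        refine Finset.sum_congr rfl fun i hi => ?_
        rw [← Finset.sum_filter, Finset.sum_const,
          card_filter_mem_powersetCard s k i hi hk, nsmul_eq_mul]
  _ = (Nat.choose (s.card - 1) (k - 1) : ℝ) * ∑ i ∈ s, v i := by rw [Finset.mul_sum]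


end Stmt14Aux


theorem stmt_14 {Ω : Type*} [MeasurableSpace Ω] (P : Measure Ω) [IsProbabilityMeasure P]
    (a b : ℕ) (ha : 1 ≤ a)
    (F : ℝ → ℝ) (hFconv : ConvexOn ℝ (Set.Ici (0 : ℝ)) F)
    (hFmono : MonotoneOn F (Set.Ici (0 : ℝ)))
    (X : Fin a → Ω → ℝ) (Y : Fin b → Ω → ℝ)
    (hXm : ∀ i, Measurable (X i)) (hYm : ∀ j, Measurable (Y j))
    (hXnn : ∀ i ω, 0 ≤ X i ω) (hYnn : ∀ j ω, 0 ≤ Y j ω)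
    (hindep : ProbabilityTheory.iIndepFun
      (Sum.elim X Y : Fin a ⊕ Fin b → Ω → ℝ) P)
    (hdom : ∀ i j (t : ℝ), P {ω | t ≤ Y j ω} ≤ P {ω | t ≤ X i ω})
    (hint1 : Integrable (fun ω => F ((1 / (a + b : ℝ)) * (∑ i, X i ω + ∑ j, Y j ω))) P)
    (hint2 : Integrable (fun ω => F ((1 / (a : ℝ)) * ∑ i, X i ω)) P) :
    ∫ ω, F ((1 / (a + b : ℝ)) * (∑ i, X i ω + ∑ j, Y j ω)) ∂P
      ≤ ∫ ω, F ((1 / (a : ℝ)) * ∑ i, X i ω) ∂P := by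
  classical
  have hZm : ∀ i, Measurable (Sum.elim X Y i) := by rintro (i | j); exacts [hXm i, hYm j]
  have hZnn : ∀ i ω, 0 ≤ Sum.elim X Y i ω := by rintro (i | j) ω
                                                exacts [hXnn i ω, hYnn j ω]
  have ha' : (0:ℝ) < a := by exact_mod_cast ha
  have hb' : (0:ℝ) ≤ b := Nat.cast_nonneg b
  -- the shifted function
  set f : ℝ → ℝ := fun x => F (max x 0) - F 0 with hfdef
  have hfmono : Monotone f := by
    intro x y hxy
    have h1 := hFmono (mem_Ici.2 (le_max_right x 0)) (mem_Ici.2 (le_max_right y 0))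
      (max_le_max hxy le_rfl)
    simpa [hfdef] using sub_le_sub_right h1 (F 0)
  have hfnn : ∀ x, 0 ≤ f x := fun x => sub_nonneg.2
    (hFmono (mem_Ici.2 le_rfl) (mem_Ici.2 (le_max_right x 0)) (le_max_right x 0))
  have hfm : Measurable f := hfmono.measurable
  have hfeq : ∀ x, 0 ≤ x → f x = F x - F 0 := fun x hx => by simp [hfdef, max_eq_left hx]
  set g : ℝ → ℝ≥0∞ := fun s => ENNReal.ofReal (f (1 / (a:ℝ) * s)) with hgdef
  have hgmono : Monotone g := fun x y hxy => ENNReal.ofReal_le_ofReal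
    (hfmono (mul_le_mul_of_nonneg_left hxy (by positivity)))
  have hgm : Measurable g :=
    ENNReal.measurable_ofReal.comp (hfm.comp (measurable_id.const_mul _))
  -- measurability and nonnegativity of sums
  have hXsm : Measurable fun ω => ∑ i, X i ω := Finset.measurable_sum _ fun i _ => hXm i
  have hXSnn : ∀ ω, 0 ≤ ∑ i, X i ω := fun ω => Finset.sum_nonneg fun i _ => hXnn i ω
  have hXYsm : Measurable fun ω => ∑ i, X i ω + ∑ j, Y j ω :=
    hXsm.add (Finset.measurable_sum _ fun j _ => hYm j)
  have hXYnn : ∀ ω, 0 ≤ ∑ i, X i ω + ∑ j, Y j ω :=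
    fun ω => add_nonneg (hXSnn ω) (Finset.sum_nonneg fun j _ => hYnn j ω)
  -- conversion of Bochner integral to lintegral
  have hconv : ∀ (u : Ω → ℝ), Measurable u → (∀ ω, 0 ≤ u ω) →
      Integrable (fun ω => F (u ω)) P →
      ∫ ω, F (u ω) ∂P = (∫⁻ ω, ENNReal.ofReal (f (u ω)) ∂P).toReal + F 0 := by
    intro u hum hunn hint
    have h1 : (fun ω => F (u ω)) = fun ω => f (u ω) + F 0 := funext fun ω => by
      rw [hfeq _ (hunn ω)]; ring
    have hfint : Integrable (fun ω => f (u ω)) P := by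
      have h2 : (fun ω => f (u ω)) = fun ω => F (u ω) - F 0 := funext fun ω => hfeq _ (hunn ω)
      rw [h2]; exact hint.sub (integrable_const _)
    rw [h1, integral_add hfint (integrable_const _), integral_const, probReal_univ,
      one_smul,
      integral_eq_lintegral_of_nonneg_ae (Filter.Eventually.of_forall fun ω => hfnn _)
        (hfm.comp hum).aestronglyMeasurable]
  -- the right-hand side lintegral
  set R : ℝ≥0∞ := ∫⁻ ω, ENNReal.ofReal (f (1 / (a:ℝ) * ∑ i, X i ω)) ∂P with hRdef
  have hu2nn : ∀ ω, 0 ≤ 1 / (a:ℝ) * ∑ i, X i ω :=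
    fun ω => mul_nonneg (by positivity) (hXSnn ω)
  have hRfin : R ≠ ⊤ := by
    have hfint : Integrable (fun ω => f (1 / (a:ℝ) * ∑ i, X i ω)) P := by
      have h2 : (fun ω => f (1 / (a:ℝ) * ∑ i, X i ω))
          = fun ω => F (1 / (a:ℝ) * ∑ i, X i ω) - F 0 := funext fun ω => hfeq _ (hu2nn ω)
      rw [h2]; exact hint2.sub (integrable_const _)
    exact hfint.lintegral_lt_top.ne
  -- the X family: law and pi measure
  have hindX : ProbabilityTheory.iIndepFun
      X P :=
    Stmt14Aux.iIndepFun_comp_inj hindep (Sum.inl_injective (α := Fin a) (β := Fin b))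
  have hmapX : Measure.pi (fun k => P.map (X k)) = P.map (fun ω k => X k ω) :=
    Stmt14Aux.map_fun_eq_pi P hXm hindX
  have hprobX : ∀ k, IsProbabilityMeasure (P.map (X k)) :=
    fun k => Measure.isProbabilityMeasure_map (hXm k).aemeasurable
  have hgsum_m : Measurable fun x : Fin a → ℝ => g (∑ k, x k) :=
    hgm.comp (Finset.measurable_sum _ fun k _ => measurable_pi_apply k)
  have hReq : R = ∫⁻ x, g (∑ k, x k) ∂Measure.pi (fun k => P.map (X k)) := by
    rw [hmapX, lintegral_map hgsum_m (measurable_pi_lambda _ hXm)]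
  -- the key per-subset bound
  have key : ∀ A ∈ Finset.powersetCard a (Finset.univ : Finset (Fin a ⊕ Fin b)),
      ∫⁻ ω, g (∑ i ∈ A, Sum.elim X Y i ω) ∂P ≤ R := by
    intro A hA
    obtain ⟨hAsub, hAcard⟩ := Finset.mem_powersetCard.1 hA
    have hcards : A.toLeft.card + A.toRight.card = a := by
      rw [Finset.card_toLeft_add_card_toRight, hAcard]
    have hccomp : (A.toLeftᶜ : Finset (Fin a)).card = A.toRight.card := by
      rw [Finset.card_compl, Fintype.card_fin]; omega
    set γ : {x // x ∈ A.toLeftᶜ} ≃ {x // x ∈ A.toRight} := Finset.equivOfCardEq hccomp with hγ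
    set ψ : Fin a → Fin a ⊕ Fin b := fun k =>
      if h : Sum.inl k ∈ A then Sum.inl k
      else Sum.inr (γ ⟨k, by simp [Finset.mem_compl, Finset.mem_toLeft, h]⟩).1 with hψ
    have hψspec : ∀ k, ψ k = Sum.inl k ∧ Sum.inl k ∈ A
        ∨ ∃ j, ψ k = Sum.inr j ∧ Sum.inr j ∈ A := by
      intro k
      by_cases h : Sum.inl k ∈ A
      · exact Or.inl ⟨by simp [hψ, h], h⟩
      · refine Or.inr ⟨(γ ⟨k, by simp [Finset.mem_compl, Finset.mem_toLeft, h]⟩).1,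
          by simp [hψ, h], ?_⟩
        have h2 := (γ ⟨k, by simp [Finset.mem_compl, Finset.mem_toLeft, h]⟩).2
        rwa [Finset.mem_toRight] at h2
    have hψinj : Function.Injective ψ := by
      intro k1 k2 hk
      by_cases h1 : Sum.inl k1 ∈ A <;> by_cases h2 : Sum.inl k2 ∈ A <;>
        simp only [hψ, h1, h2, dif_pos, dif_neg, not_false_iff] at hk
      · exact Sum.inl_injective hk
      · exact absurd hk (by simp)
      · exact absurd hk (by simp)
      · have h3 := Sum.inr_injective hk
        have h4 := γ.injective (Subtype.ext h3)
        exact congrArg Subtype.val h4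
    have hψA : ∀ k, ψ k ∈ A := by
      intro k
      rcases hψspec k with ⟨h1, m1⟩ | ⟨j, h1, m1⟩
      · rw [h1]; exact m1
      · rw [h1]; exact m1
    have himg : Finset.image ψ Finset.univ = A := by
      refine Finset.eq_of_subset_of_card_le ?_ ?_
      · intro x hx
        obtain ⟨k, _, rfl⟩ := Finset.mem_image.1 hx
        exact hψA k
      · rw [Finset.card_image_of_injective _ hψinj, Finset.card_univ, Fintype.card_fin, hAcard]
    have hsumA : ∀ ω, ∑ i ∈ A, Sum.elim X Y i ω = ∑ k, Sum.elim X Y (ψ k) ω := by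
      intro ω
      rw [← himg, Finset.sum_image (fun x _ y _ h => hψinj h)]
    have hindψ := Stmt14Aux.iIndepFun_comp_inj hindep hψinj
    have hprobμ : ∀ k, IsProbabilityMeasure (P.map (Sum.elim X Y (ψ k))) :=
      fun k => Measure.isProbabilityMeasure_map (hZm _).aemeasurable
    have hdomk : ∀ k t, (P.map (Sum.elim X Y (ψ k))) (Ici t) ≤ (P.map (X k)) (Ici t) := by
      intro k t
      rw [Measure.map_apply (hZm _) measurableSet_Ici,
        Measure.map_apply (hXm k) measurableSet_Ici]
      rcases hψspec k with ⟨h1, _⟩ | ⟨j, h1, _⟩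
      · rw [h1]
        exact le_rfl
      · rw [h1]
        exact hdom k j t
    have hmapψ := Stmt14Aux.map_fun_eq_pi P (fun k => hZm (ψ k)) hindψ
    calc ∫⁻ ω, g (∑ i ∈ A, Sum.elim X Y i ω) ∂P
        = ∫⁻ ω, g (∑ k, Sum.elim X Y (ψ k) ω) ∂P := lintegral_congr fun ω => by rw [hsumA]
    _ = ∫⁻ x, g (∑ k, x k) ∂(P.map (fun ω k => Sum.elim X Y (ψ k) ω)) :=
        (lintegral_map hgsum_m (measurable_pi_lambda _ fun k => hZm (ψ k))).symm
    _ = ∫⁻ x, g (∑ k, x k) ∂Measure.pi (fun k => P.map (Sum.elim X Y (ψ k))) := by rw [hmapψ]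
    _ ≤ ∫⁻ x, g (∑ k, x k) ∂Measure.pi (fun k => P.map (X k)) :=
        Stmt14Aux.pi_sum_le _ _ hprobμ hprobX hdomk hgmono hgm
    _ = R := hReq.symm
  -- counting facts
  have hab : Fintype.card (Fin a ⊕ Fin b) = a + b := by simp
  have hCpos : 0 < Nat.choose (a + b) a := Nat.choose_pos (by omega)
  have hCne : ((Nat.choose (a + b) a : ℕ) : ℝ) ≠ 0 := by
    exact_mod_cast hCpos.ne'
  have hnatN : a * Nat.choose (a + b) a = (a + b) * Nat.choose (a + b - 1) (a - 1) := by
    obtain ⟨a', rfl⟩ : ∃ a', a = a' + 1 := ⟨a - 1, by omega⟩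
    have h4 : (a' + b).succ * (a' + b).choose a' = (a' + b + 1).choose (a' + 1) * (a' + 1) :=
      Nat.add_one_mul_choose_eq (a' + b) a'
    have h2 : a' + 1 + b - 1 = a' + b := by omega
    have h3 : a' + 1 - 1 = a' := by omega
    have h5 : a' + 1 + b = a' + b + 1 := by omega
    rw [h2, h3, h5]
    simpa [Nat.succ_eq_add_one, mul_comm] using h4.symm
  have hnat : (a : ℝ) * Nat.choose (a + b) a
      = ((a : ℝ) + b) * Nat.choose (a + b - 1) (a - 1) := by
    have := congrArg (Nat.cast : ℕ → ℝ) hnatN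
    push_cast at this
    linarith [this]
  have hcard : (Finset.powersetCard a (Finset.univ : Finset (Fin a ⊕ Fin b))).card
      = Nat.choose (a + b) a := by
    rw [Finset.card_powersetCard, Finset.card_univ, hab]
  -- pointwise convexity bound
  have hptwise : ∀ ω, f (1 / ((a:ℝ) + b) * (∑ i, X i ω + ∑ j, Y j ω))
      ≤ (Nat.choose (a + b) a : ℝ)⁻¹
        * ∑ A ∈ Finset.powersetCard a (Finset.univ : Finset (Fin a ⊕ Fin b)),
          f (1 / (a:ℝ) * ∑ i ∈ A, Sum.elim X Y i ω) := by
    intro ω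
    set P' := Finset.powersetCard a (Finset.univ : Finset (Fin a ⊕ Fin b)) with hP'
    have hpnn : ∀ A, 0 ≤ 1 / (a:ℝ) * ∑ i ∈ A, Sum.elim X Y i ω :=
      fun A => mul_nonneg (by positivity) (Finset.sum_nonneg fun i _ => hZnn i ω)
    have hJ := hFconv.map_sum_le (t := P') (w := fun _ => (Nat.choose (a + b) a : ℝ)⁻¹)
      (p := fun A => 1 / (a:ℝ) * ∑ i ∈ A, Sum.elim X Y i ω)
      (fun A _ => by positivity)
      (by rw [Finset.sum_const, hcard, nsmul_eq_mul, mul_inv_cancel₀ hCne])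
      (fun A _ => mem_Ici.2 (hpnn A))
    have hs0 : ∑ i : Fin a ⊕ Fin b, Sum.elim X Y i ω = ∑ i, X i ω + ∑ j, Y j ω := by
      rw [Fintype.sum_sum_type]
      rfl
    have heq : ∑ A ∈ P', (Nat.choose (a + b) a : ℝ)⁻¹
          • (1 / (a:ℝ) * ∑ i ∈ A, Sum.elim X Y i ω)
        = 1 / ((a:ℝ) + b) * (∑ i, X i ω + ∑ j, Y j ω) := by
      have hsum := Stmt14Aux.sum_powersetCard_sum
        (Finset.univ : Finset (Fin a ⊕ Fin b)) a ha (fun i => Sum.elim X Y i ω)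
      rw [Finset.card_univ, hab] at hsum
      simp only [smul_eq_mul]
      rw [← Finset.mul_sum, ← Finset.mul_sum, hsum, hs0]
      field_simp
      nlinarith [hnat, hXYnn ω]
    rw [heq] at hJ
    have hnn1 : 0 ≤ 1 / ((a:ℝ) + b) * (∑ i, X i ω + ∑ j, Y j ω) :=
      mul_nonneg (by positivity) (hXYnn ω)
    calc f (1 / ((a:ℝ) + b) * (∑ i, X i ω + ∑ j, Y j ω))
        = F (1 / ((a:ℝ) + b) * (∑ i, X i ω + ∑ j, Y j ω)) - F 0 := hfeq _ hnn1
    _ ≤ (∑ A ∈ P', (Nat.choose (a + b) a : ℝ)⁻¹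
          • F (1 / (a:ℝ) * ∑ i ∈ A, Sum.elim X Y i ω)) - F 0 := by linarith
    _ = (Nat.choose (a + b) a : ℝ)⁻¹ * ∑ A ∈ P', f (1 / (a:ℝ) * ∑ i ∈ A, Sum.elim X Y i ω) := by
        have hcg : ∀ A ∈ P', (Nat.choose (a + b) a : ℝ)⁻¹
              • F (1 / (a:ℝ) * ∑ i ∈ A, Sum.elim X Y i ω)
            = (Nat.choose (a + b) a : ℝ)⁻¹ * f (1 / (a:ℝ) * ∑ i ∈ A, Sum.elim X Y i ω)
              + (Nat.choose (a + b) a : ℝ)⁻¹ * F 0 := by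
          intro A _
          rw [smul_eq_mul, hfeq _ (hpnn A)]
          ring
        rw [Finset.sum_congr rfl hcg, Finset.sum_add_distrib, Finset.sum_const, hcard,
          ← Finset.mul_sum, nsmul_eq_mul, ← mul_assoc, mul_inv_cancel₀ hCne]
        ring
  -- assemble
  rw [hconv _ (hXYsm.const_mul _) (fun ω => mul_nonneg (by positivity) (hXYnn ω)) hint1,
    hconv _ (hXsm.const_mul _) hu2nn hint2]
  apply add_le_add_left
  apply ENNReal.toReal_mono hRfin
  have hmA : ∀ A : Finset (Fin a ⊕ Fin b),
      Measurable fun ω => ENNReal.ofReal (f (1 / (a:ℝ) * ∑ i ∈ A, Sum.elim X Y i ω)) :=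
    fun A => ENNReal.measurable_ofReal.comp
      (hfm.comp ((Finset.measurable_sum _ fun i _ => hZm i).const_mul _))
  calc ∫⁻ ω, ENNReal.ofReal (f (1 / ((a:ℝ) + b) * (∑ i, X i ω + ∑ j, Y j ω))) ∂P
      ≤ ∫⁻ ω, ENNReal.ofReal ((Nat.choose (a + b) a : ℝ)⁻¹
          * ∑ A ∈ Finset.powersetCard a (Finset.univ : Finset (Fin a ⊕ Fin b)),
            f (1 / (a:ℝ) * ∑ i ∈ A, Sum.elim X Y i ω)) ∂P :=
        lintegral_mono fun ω => ENNReal.ofReal_le_ofReal (hptwise ω)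
  _ = ENNReal.ofReal ((Nat.choose (a + b) a : ℝ)⁻¹)
        * ∑ A ∈ Finset.powersetCard a (Finset.univ : Finset (Fin a ⊕ Fin b)),
          ∫⁻ ω, ENNReal.ofReal (f (1 / (a:ℝ) * ∑ i ∈ A, Sum.elim X Y i ω)) ∂P := by
      rw [← lintegral_finset_sum _ (fun A _ => hmA A), ← lintegral_const_mul _
        (Finset.measurable_sum _ (fun A _ => hmA A))]
      apply lintegral_congr fun ω => ?_
      rw [ENNReal.ofReal_mul (by positivity), ENNReal.ofReal_sum_of_nonneg
        (fun A _ => hfnn _)]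
  _ ≤ ENNReal.ofReal ((Nat.choose (a + b) a : ℝ)⁻¹)
        * ∑ A ∈ Finset.powersetCard a (Finset.univ : Finset (Fin a ⊕ Fin b)), R := by
      apply mul_le_mul_right (Finset.sum_le_sum fun A hA => ?_)
      exact key A hA
  _ = R := by
      rw [Finset.sum_const, hcard, ENNReal.ofReal_inv_of_pos (by exact_mod_cast hCpos),
        ENNReal.ofReal_natCast, nsmul_eq_mul, ← mul_assoc,
        ENNReal.inv_mul_cancel (by exact_mod_cast hCpos.ne') (ENNReal.natCast_ne_top _), one_mul]
end

section
/- Let q : (1, ∞) → (0, 1) be defined implicitly by q(c) = e^{−c(1−q(c))}. Then lim_{c → ∞} c·q(c) = 0. -/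
theorem stmt_17 (q : ℝ → ℝ)
    (hq : ∀ c : ℝ, 1 < c → q c ∈ Set.Ioo (0 : ℝ) 1 ∧ q c = Real.exp (-c * (1 - q c))) :
    Filter.Tendsto (fun c => c * q c) Filter.atTop (nhds 0) := by
  have hbound : Filter.Tendsto (fun c : ℝ => Real.exp 1 * (c ^ 1 * Real.exp (-c)))
      Filter.atTop (nhds (Real.exp 1 * 0)) :=
    (Real.tendsto_pow_mul_exp_neg_atTop_nhds_zero 1).const_mul _
  rw [mul_zero] at hbound
  apply squeeze_zero' (g := fun c : ℝ => Real.exp 1 * (c ^ 1 * Real.exp (-c))) _ _ hbound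
  · filter_upwards [Filter.eventually_gt_atTop 1] with c hc
    obtain ⟨⟨h0, h1⟩, _⟩ := hq c hc
    positivity
  · filter_upwards [Filter.eventually_gt_atTop 1] with c hc
    obtain ⟨⟨h0, h1⟩, heq⟩ := hq c hc
    set x := c * q c with hxdef
    have hc0 : (0:ℝ) < c := lt_trans one_pos hc
    have hx0 : 0 < x := mul_pos hc0 h0
    have hxc : x < c := by
      calc x = c * q c := rfl
        _ < c * 1 := by exact mul_lt_mul_of_pos_left h1 hc0
        _ = c := mul_one c
    -- key identity: x * exp(-x) = c * exp(-c)
    have hkey : x * Real.exp (-x) = c * Real.exp (-c) := by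
      have : q c = Real.exp (-c) * Real.exp x := by
        rw [heq, ← Real.exp_add]; ring_nf; rw [hxdef]
      calc x * Real.exp (-x) = c * q c * Real.exp (-x) := rfl
        _ = c * (Real.exp (-c) * Real.exp x) * Real.exp (-x) := by rw [← this]
        _ = c * Real.exp (-c) * (Real.exp x * Real.exp (-x)) := by ring
        _ = c * Real.exp (-c) := by rw [← Real.exp_add, add_neg_cancel, Real.exp_zero, mul_one]
    -- x < 1
    have hx1 : x ≤ 1 := by
      by_contra h
      push_neg at h
      have h1x : (1:ℝ) ≤ x := le_of_lt h
      have hlt : 1 + (c - x) < Real.exp (c - x) := by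
        linarith [Real.add_one_lt_exp (show c - x ≠ 0 by intro h'; linarith)]
      have hcx : c < x * Real.exp (c - x) := by
        nlinarith [hlt]
      have hexp : Real.exp (c - x) = Real.exp (-x) / Real.exp (-c) := by
        rw [← Real.exp_sub]; ring_nf
      have hec : 0 < Real.exp (-c) := Real.exp_pos _
      rw [hexp] at hcx
      have : c * Real.exp (-c) < x * Real.exp (-x) := by
        rw [div_eq_mul_inv] at hcx
        calc c * Real.exp (-c) < x * (Real.exp (-x) * (Real.exp (-c))⁻¹) * Real.exp (-c) := by
              exact mul_lt_mul_of_pos_right hcx hec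
          _ = x * Real.exp (-x) := by field_simp
      linarith [hkey]
    -- conclude
    have hxe : x = c * Real.exp (-c) * Real.exp x := by
      have hx : Real.exp (-x) * Real.exp x = 1 := by
        rw [← Real.exp_add, neg_add_cancel, Real.exp_zero]
      calc x = x * (Real.exp (-x) * Real.exp x) := by rw [hx, mul_one]
        _ = x * Real.exp (-x) * Real.exp x := by ring
        _ = c * Real.exp (-c) * Real.exp x := by rw [hkey]
    show x ≤ _
    rw [hxe, pow_one]
    have hce : 0 ≤ c * Real.exp (-c) := le_of_lt (mul_pos hc0 (Real.exp_pos _))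
    calc c * Real.exp (-c) * Real.exp x ≤ c * Real.exp (-c) * Real.exp 1 :=
          mul_le_mul_of_nonneg_left (Real.exp_le_exp.mpr hx1) hce
      _ = Real.exp 1 * (c * Real.exp (-c)) := by ring
end
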